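/- Let n > 10 and let G be a complete edge-colored graph with coloring γ in which no n-cycle is rainbow. Suppose G contains a rainbow (3n−8)-cycle v_0 → v_1 → ⋯ → v_{3n−9} → v_0 with (pairwise distinct) edge colors c_i = γ(v_i, v_{i+1}), all indices taken modulo 3n−8, and suppose that γ(v_i, v_{i+n−1}) ∈ {c_i, c_{i+1}} and γ(v_i, v_{i+n−5}) ∈ {c_{i+n−5}, c_{i+n−4}} for every i. Then γ(v_i, v_{i+7}) ∈ {c_i, c_{i+1}} for every i modulo 3n−8. -/
import Mathlib


/-- A rainbow `m`-cycle in the complete graph on `V` edge-colored by `γ`: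
pairwise distinct vertices `v i` (`i` mod `m`) with pairwise distinct edge colors
`γ (v i) (v (i+1))`. -/
def RainbowCycle {V C : Type*} (γ : V → V → C) (m : ℕ) (v : ZMod m → V) : Prop :=
  Function.Injective v ∧ Function.Injective (fun i : ZMod m => γ (v i) (v (i + 1)))

private lemma zmodcast_inj {M : ℕ} [NeZero M] {a b : ℕ} (ha : a < M) (hb : b < M)
    (h : (a : ZMod M) = (b : ZMod M)) : a = b := by
  have h2 := congrArg ZMod.val h
  rwa [ZMod.val_cast_of_lt ha, ZMod.val_cast_of_lt hb] at h2

/-- Key lemma: given an `n`-cycle through the chord `(i, i+7)` (positions `0` and `1`),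
described by an index function `idx` with known colors described by a spec `S`,
non-rainbowness forces the chord color to be one of the spec colors. -/
private lemma key {V C : Type*} (γ : V → V → C) (n : ℕ) (hn : 10 < n)
    (hno : ∀ u : ZMod n → V, ¬ RainbowCycle γ n u)
    (v : ZMod (3*n-8) → V) (hvinj : Function.Injective v)
    (c : ZMod (3*n-8) → C) (hcinj : Function.Injective c)
    (i : ZMod (3*n-8)) (idx : ℕ → ℕ) (S : ℕ → ℕ → Prop)
    (hidxlt : ∀ a, a < n → idx a < 3*n-8)
    (hidxinj : ∀ a b, a < n → b < n → idx a = idx b → a = b)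
    (hidx0 : idx 0 = 0) (hidx1 : idx 1 = 7)
    (hSinj : ∀ a b s, a < n → b < n → S a s → S b s → a = b)
    (hspec : ∀ a, 1 ≤ a → a < n →
      ∃ s, s < 3*n-8 ∧ S a s ∧
        γ (v (i + (idx a : ZMod (3*n-8)))) (v (i + (idx ((a+1) % n) : ZMod (3*n-8))))
          = c (i + (s : ZMod (3*n-8)))) :
    ∃ s, s < 3*n-8 ∧ (∃ a, 1 ≤ a ∧ a < n ∧ S a s) ∧
      γ (v i) (v (i + 7)) = c (i + (s : ZMod (3*n-8))) := by
  haveI : NeZero n := ⟨by omega⟩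
  haveI : NeZero (3*n-8) := ⟨by omega⟩
  have hvallt : ∀ p : ZMod n, p.val < n := fun p => ZMod.val_lt p
  have hvalinj : ∀ p q : ZMod n, p.val = q.val → p = q := by
    intro p q h
    have h2 := congrArg (Nat.cast : ℕ → ZMod n) h
    rwa [ZMod.natCast_val, ZMod.natCast_val, ZMod.cast_id, ZMod.cast_id] at h2
  set u : ZMod n → V := fun p => v (i + (idx p.val : ZMod (3*n-8))) with hu
  have huinj : Function.Injective u := by
    intro p q h
    have h2 := hvinj h
    have h3 : (idx p.val : ZMod (3*n-8)) = (idx q.val : ZMod (3*n-8)) :=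
      add_left_cancel h2
    exact hvalinj p q (hidxinj _ _ (hvallt p) (hvallt q)
      (zmodcast_inj (hidxlt _ (hvallt p)) (hidxlt _ (hvallt q)) h3))
  have hcol : ¬ Function.Injective (fun p : ZMod n => γ (u p) (u (p+1))) := by
    intro h; exact hno u ⟨huinj, h⟩
  obtain ⟨p, q, hpq, hne⟩ := Function.not_injective_iff.mp hcol
  have hval1 : (1 : ZMod n).val = 1 := by
    have h2 : ((1:ℕ) : ZMod n) = (1 : ZMod n) := Nat.cast_one
    rw [← h2, ZMod.val_cast_of_lt (by omega)]
  have hsucc : ∀ p : ZMod n, (p + 1).val = (p.val + 1) % n := by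
    intro p; rw [ZMod.val_add, hval1]
  have hcolor : ∀ p : ZMod n, p.val ≠ 0 → ∃ s, s < 3*n-8 ∧ S p.val s ∧
      γ (u p) (u (p+1)) = c (i + (s : ZMod (3*n-8))) := by
    intro p hp
    obtain ⟨s, hs1, hs2, hs3⟩ := hspec p.val (by omega) (hvallt p)
    refine ⟨s, hs1, hs2, ?_⟩
    show γ (v (i + (idx p.val : ZMod (3*n-8)))) (v (i + (idx ((p+1).val) : ZMod (3*n-8)))) = _
    rw [hsucc p]; exact hs3
  have htar : ∀ p : ZMod n, p.val = 0 → γ (u p) (u (p+1)) = γ (v i) (v (i+7)) := by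
    intro p hp
    have e1 : u p = v i := by
      show v (i + (idx p.val : ZMod (3*n-8))) = v i
      rw [hp, hidx0]; norm_num
    have e2 : u (p+1) = v (i+7) := by
      show v (i + (idx ((p+1).val) : ZMod (3*n-8))) = v (i+7)
      rw [hsucc p, hp]
      have e3 : (0 + 1) % n = 1 := Nat.mod_eq_of_lt (by omega)
      rw [e3, hidx1]; norm_num
    rw [e1, e2]
  rcases Nat.eq_zero_or_pos p.val with hp0 | hppos
  · rcases Nat.eq_zero_or_pos q.val with hq0 | hqpos
    · exact absurd (hvalinj p q (hp0.trans hq0.symm)) hne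
    · obtain ⟨s, hs1, hs2, hs3⟩ := hcolor q (by omega)
      refine ⟨s, hs1, ⟨q.val, by omega, hvallt q, hs2⟩, ?_⟩
      rw [← htar p hp0]; exact hpq.trans hs3
  · rcases Nat.eq_zero_or_pos q.val with hq0 | hqpos
    · obtain ⟨s, hs1, hs2, hs3⟩ := hcolor p (by omega)
      refine ⟨s, hs1, ⟨p.val, by omega, hvallt p, hs2⟩, ?_⟩
      rw [← htar q hq0, ← hpq]; exact hs3
    · exfalso
      obtain ⟨s, hs1, hs2, hs3⟩ := hcolor p (by omega)
      obtain ⟨s', hs1', hs2', hs3'⟩ := hcolor q (by omega)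
      have e : c (i + (s : ZMod (3*n-8))) = c (i + (s' : ZMod (3*n-8))) := by
        rw [← hs3, ← hs3', hpq]
      have e2 : s = s' := zmodcast_inj hs1 hs1' (add_left_cancel (hcinj e))
      subst e2
      exact hne (hvalinj p q (hSinj _ _ _ (hvallt p) (hvallt q) hs2 hs2'))

/-- index function of design 1: `0, 7, 8, …, n+2, 3, 2, 1`. -/
private def idx1 (n a : ℕ) : ℕ :=
  if a = 0 then 0 else if a ≤ n-4 then a+6 else if a = n-3 then 3 else
  if a = n-2 then 2 else 1

private lemma idx1_cases (n : ℕ) (hn : 10 < n) (a : ℕ) (ha : a < n) :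
    (a = 0 ∧ idx1 n a = 0) ∨ (1 ≤ a ∧ a ≤ n-4 ∧ idx1 n a = a+6) ∨
    (a = n-3 ∧ idx1 n a = 3) ∨ (a = n-2 ∧ idx1 n a = 2) ∨ (a = n-1 ∧ idx1 n a = 1) := by
  rcases (by omega : a = 0 ∨ (1 ≤ a ∧ a ≤ n-4) ∨ a = n-3 ∨ a = n-2 ∨ a = n-1) with
    h|h|h|h|h
  · exact Or.inl ⟨h, by unfold idx1; rw [if_pos h]⟩
  · refine Or.inr (Or.inl ⟨h.1, h.2, ?_⟩)
    unfold idx1; rw [if_neg (by omega), if_pos (by omega)]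
  · refine Or.inr (Or.inr (Or.inl ⟨h, ?_⟩))
    unfold idx1; rw [if_neg (by omega), if_neg (by omega), if_pos (by omega)]
  · refine Or.inr (Or.inr (Or.inr (Or.inl ⟨h, ?_⟩)))
    unfold idx1
    rw [if_neg (by omega), if_neg (by omega), if_neg (by omega), if_pos (by omega)]
  · refine Or.inr (Or.inr (Or.inr (Or.inr ⟨h, ?_⟩)))
    unfold idx1
    rw [if_neg (by omega), if_neg (by omega), if_neg (by omega), if_neg (by omega)]

private def S1 (n a s : ℕ) : Prop :=
  (1 ≤ a ∧ a ≤ n-5 ∧ s = a+6) ∨ (a = n-4 ∧ (s = 3 ∨ s = 4)) ∨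
  (a = n-3 ∧ s = 2) ∨ (a = n-2 ∧ s = 1) ∨ (a = n-1 ∧ s = 0)

/-- index function of design 2: `0, 7, n+2, 2n-3, 2n-4, 2n-5, 3n-10, 3n-11, …, 2n-1, 2, 1`. -/
private def idx2 (n a : ℕ) : ℕ :=
  if a = 0 then 0 else if a = 1 then 7 else if a = 2 then n+2 else
  if 3 ≤ a ∧ a ≤ 5 then 2*n-a else
  if a ≤ n-3 then 3*n-4-a else if a = n-2 then 2 else 1

private lemma idx2_cases (n : ℕ) (hn : 10 < n) (a : ℕ) (ha : a < n) :
    (a = 0 ∧ idx2 n a = 0) ∨ (a = 1 ∧ idx2 n a = 7) ∨ (a = 2 ∧ idx2 n a = n+2) ∨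
    (3 ≤ a ∧ a ≤ 5 ∧ idx2 n a = 2*n-a) ∨ (6 ≤ a ∧ a ≤ n-3 ∧ idx2 n a = 3*n-4-a) ∨
    (a = n-2 ∧ idx2 n a = 2) ∨ (a = n-1 ∧ idx2 n a = 1) := by
  rcases (by omega : a = 0 ∨ a = 1 ∨ a = 2 ∨ (3 ≤ a ∧ a ≤ 5) ∨ (6 ≤ a ∧ a ≤ n-3) ∨
    a = n-2 ∨ a = n-1) with h|h|h|h|h|h|h
  · exact Or.inl ⟨h, by unfold idx2; rw [if_pos h]⟩
  · refine Or.inr (Or.inl ⟨h, ?_⟩)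
    unfold idx2; rw [if_neg (by omega), if_pos h]
  · refine Or.inr (Or.inr (Or.inl ⟨h, ?_⟩))
    unfold idx2; rw [if_neg (by omega), if_neg (by omega), if_pos h]
  · refine Or.inr (Or.inr (Or.inr (Or.inl ⟨h.1, h.2, ?_⟩)))
    unfold idx2
    rw [if_neg (by omega), if_neg (by omega), if_neg (by omega), if_pos (by omega)]
  · refine Or.inr (Or.inr (Or.inr (Or.inr (Or.inl ⟨h.1, h.2, ?_⟩))))
    unfold idx2
    rw [if_neg (by omega), if_neg (by omega), if_neg (by omega), if_neg (by omega),
      if_pos (by omega)]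
  · refine Or.inr (Or.inr (Or.inr (Or.inr (Or.inr (Or.inl ⟨h, ?_⟩)))))
    unfold idx2
    rw [if_neg (by omega), if_neg (by omega), if_neg (by omega), if_neg (by omega),
      if_neg (by omega), if_pos (by omega)]
  · refine Or.inr (Or.inr (Or.inr (Or.inr (Or.inr (Or.inr ⟨h, ?_⟩)))))
    unfold idx2
    rw [if_neg (by omega), if_neg (by omega), if_neg (by omega), if_neg (by omega),
      if_neg (by omega), if_neg (by omega)]

private def S2 (n a s : ℕ) : Prop :=
  (a = 1 ∧ (s = n+2 ∨ s = n+3)) ∨ (a = 2 ∧ (s = 2*n-3 ∨ s = 2*n-2)) ∨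
  (a = 3 ∧ s = 2*n-4) ∨ (a = 4 ∧ s = 2*n-5) ∨ (a = 5 ∧ (s = 3*n-10 ∨ s = 3*n-9)) ∨
  (6 ≤ a ∧ a ≤ n-4 ∧ s = 3*n-5-a) ∨ (a = n-3 ∧ (s = 2 ∨ s = 3)) ∨
  (a = n-2 ∧ s = 1) ∨ (a = n-1 ∧ s = 0)

/-- index function of design 3: `0, 7, n+6, 11, 12, …, n+4, 2n-1, 2n-2, 2n-3`. -/
private def idx3 (n a : ℕ) : ℕ :=
  if a = 0 then 0 else if a = 1 then 7 else if a = 2 then n+6 else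
  if a ≤ n-4 then a+8 else if a = n-3 then 2*n-1 else if a = n-2 then 2*n-2 else 2*n-3

private lemma idx3_cases (n : ℕ) (hn : 10 < n) (a : ℕ) (ha : a < n) :
    (a = 0 ∧ idx3 n a = 0) ∨ (a = 1 ∧ idx3 n a = 7) ∨ (a = 2 ∧ idx3 n a = n+6) ∨
    (3 ≤ a ∧ a ≤ n-4 ∧ idx3 n a = a+8) ∨ (a = n-3 ∧ idx3 n a = 2*n-1) ∨
    (a = n-2 ∧ idx3 n a = 2*n-2) ∨ (a = n-1 ∧ idx3 n a = 2*n-3) := by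
  rcases (by omega : a = 0 ∨ a = 1 ∨ a = 2 ∨ (3 ≤ a ∧ a ≤ n-4) ∨ a = n-3 ∨
    a = n-2 ∨ a = n-1) with h|h|h|h|h|h|h
  · exact Or.inl ⟨h, by unfold idx3; rw [if_pos h]⟩
  · refine Or.inr (Or.inl ⟨h, ?_⟩)
    unfold idx3; rw [if_neg (by omega), if_pos h]
  · refine Or.inr (Or.inr (Or.inl ⟨h, ?_⟩))
    unfold idx3; rw [if_neg (by omega), if_neg (by omega), if_pos h]
  · refine Or.inr (Or.inr (Or.inr (Or.inl ⟨h.1, h.2, ?_⟩)))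
    unfold idx3
    rw [if_neg (by omega), if_neg (by omega), if_neg (by omega), if_pos (by omega)]
  · refine Or.inr (Or.inr (Or.inr (Or.inr (Or.inl ⟨h, ?_⟩))))
    unfold idx3
    rw [if_neg (by omega), if_neg (by omega), if_neg (by omega), if_neg (by omega),
      if_pos (by omega)]
  · refine Or.inr (Or.inr (Or.inr (Or.inr (Or.inr (Or.inl ⟨h, ?_⟩)))))
    unfold idx3
    rw [if_neg (by omega), if_neg (by omega), if_neg (by omega), if_neg (by omega),
      if_neg (by omega), if_pos (by omega)]
  · refine Or.inr (Or.inr (Or.inr (Or.inr (Or.inr (Or.inr ⟨h, ?_⟩)))))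
    unfold idx3
    rw [if_neg (by omega), if_neg (by omega), if_neg (by omega), if_neg (by omega),
      if_neg (by omega), if_neg (by omega)]

private def S3 (n a s : ℕ) : Prop :=
  (a = 1 ∧ (s = 7 ∨ s = 8)) ∨ (a = 2 ∧ (s = n+6 ∨ s = n+7)) ∨
  (3 ≤ a ∧ a ≤ n-5 ∧ s = a+8) ∨ (a = n-4 ∧ (s = 2*n-1 ∨ s = 2*n)) ∨
  (a = n-3 ∧ s = 2*n-2) ∨ (a = n-2 ∧ s = 2*n-3) ∨ (a = n-1 ∧ (s = 0 ∨ s = 1))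

set_option maxHeartbeats 4000000 in
/-- If `n > 10`, no `n`-cycle is rainbow, `v` is a rainbow `(3n-8)`-cycle with
colors `c i = γ (v i) (v (i+1))`, `γ (v i) (v (i+n-1)) ∈ {c i, c (i+1)}` and
`γ (v i) (v (i+n-5)) ∈ {c (i+n-5), c (i+n-4)}` for every `i`, then
`γ (v i) (v (i+7)) ∈ {c i, c (i+1)}` for every `i`. -/
theorem stmt5 {V C : Type*} (γ : V → V → C) (hsymm : ∀ x y, γ x y = γ y x)
    (n : ℕ) (hn : 10 < n)
    (hno : ∀ u : ZMod n → V, ¬ RainbowCycle γ n u)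
    (v : ZMod (3 * n - 8) → V) (hv : RainbowCycle γ (3 * n - 8) v)
    (c : ZMod (3 * n - 8) → C) (hc : ∀ i, c i = γ (v i) (v (i + 1)))
    (h1 : ∀ i, γ (v i) (v (i + ((n - 1 : ℕ) : ZMod (3 * n - 8)))) ∈
      ({c i, c (i + 1)} : Set C))
    (h2 : ∀ i, γ (v i) (v (i + ((n - 5 : ℕ) : ZMod (3 * n - 8)))) ∈
      ({c (i + ((n - 5 : ℕ) : ZMod (3 * n - 8))),
        c (i + ((n - 4 : ℕ) : ZMod (3 * n - 8)))} : Set C)) :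
    ∀ i, γ (v i) (v (i + 7)) ∈ ({c i, c (i + 1)} : Set C) := by
  intro i
  haveI : NeZero (3*n-8) := ⟨by omega⟩
  have hvinj : Function.Injective v := hv.1
  have hcinj : Function.Injective c := by
    intro a b h
    rw [hc a, hc b] at h
    exact hv.2 h
  have vc : ∀ {x y : ℕ}, x = y → (x : ZMod (3*n-8)) = (y : ZMod (3*n-8)) := by
    intro x y h; rw [h]
  have hM0 : ((3*n-8 : ℕ) : ZMod (3*n-8)) = 0 := ZMod.natCast_self _
  have hwrap : ∀ r : ℕ, (((3*n-8) + r : ℕ) : ZMod (3*n-8)) = (r : ZMod (3*n-8)) := by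
    intro r; rw [Nat.cast_add, hM0, zero_add]
  have hunit : ∀ k : ℕ,
      γ (v (i + (k : ZMod (3*n-8)))) (v (i + ((k+1 : ℕ) : ZMod (3*n-8))))
        = c (i + (k : ZMod (3*n-8))) := by
    intro k
    rw [hc (i + (k : ZMod (3*n-8)))]
    congr 1
    rw [Nat.cast_add, Nat.cast_one, add_assoc]
  have hbunit : ∀ k : ℕ,
      γ (v (i + ((k+1 : ℕ) : ZMod (3*n-8)))) (v (i + (k : ZMod (3*n-8))))
        = c (i + (k : ZMod (3*n-8))) := by
    intro k; rw [hsymm]; exact hunit k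
  have hch1 : ∀ k : ℕ,
      γ (v (i + (k : ZMod (3*n-8)))) (v (i + ((k + (n-1) : ℕ) : ZMod (3*n-8))))
        = c (i + (k : ZMod (3*n-8))) ∨
      γ (v (i + (k : ZMod (3*n-8)))) (v (i + ((k + (n-1) : ℕ) : ZMod (3*n-8))))
        = c (i + ((k+1 : ℕ) : ZMod (3*n-8))) := by
    intro k
    have h := h1 (i + (k : ZMod (3*n-8)))
    have e1 : (i + (k : ZMod (3*n-8))) + ((n-1 : ℕ) : ZMod (3*n-8))
        = i + ((k + (n-1) : ℕ) : ZMod (3*n-8)) := by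
      rw [Nat.cast_add, add_assoc]
    have e2 : (i + (k : ZMod (3*n-8))) + 1 = i + ((k+1 : ℕ) : ZMod (3*n-8)) := by
      rw [Nat.cast_add, Nat.cast_one, add_assoc]
    rw [e1, e2] at h
    simpa [Set.mem_insert_iff, Set.mem_singleton_iff] using h
  have hch5 : ∀ k : ℕ,
      γ (v (i + (k : ZMod (3*n-8)))) (v (i + ((k + (n-5) : ℕ) : ZMod (3*n-8))))
        = c (i + ((k + (n-5) : ℕ) : ZMod (3*n-8))) ∨
      γ (v (i + (k : ZMod (3*n-8)))) (v (i + ((k + (n-5) : ℕ) : ZMod (3*n-8))))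
        = c (i + ((k + (n-4) : ℕ) : ZMod (3*n-8))) := by
    intro k
    have h := h2 (i + (k : ZMod (3*n-8)))
    have e1 : (i + (k : ZMod (3*n-8))) + ((n-5 : ℕ) : ZMod (3*n-8))
        = i + ((k + (n-5) : ℕ) : ZMod (3*n-8)) := by
      rw [Nat.cast_add, add_assoc]
    have e2 : (i + (k : ZMod (3*n-8))) + ((n-4 : ℕ) : ZMod (3*n-8))
        = i + ((k + (n-4) : ℕ) : ZMod (3*n-8)) := by
      rw [Nat.cast_add, add_assoc]
    rw [e1, e2] at h
    simpa [Set.mem_insert_iff, Set.mem_singleton_iff] using h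
  -- ### Design 1
  have key1 := key γ n hn hno v hvinj c hcinj i (idx1 n) (S1 n)
    (by intro a ha; have := idx1_cases n hn a ha; omega)
    (by intro a b ha hb h
        have := idx1_cases n hn a ha; have := idx1_cases n hn b hb; omega)
    (by have := idx1_cases n hn 0 (by omega); omega)
    (by have := idx1_cases n hn 1 (by omega); omega)
    (by intro a b s ha hb hsa hsb; unfold S1 at hsa hsb; omega)
    (by
      intro a ha1 ha2
      have hca := idx1_cases n hn a ha2
      rcases (by omega : (1 ≤ a ∧ a ≤ n-5) ∨ a = n-4 ∨ a = n-3 ∨ a = n-2 ∨ a = n-1)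
        with h'|h'|h'|h'|h'
      · refine ⟨a+6, by omega, by unfold S1; exact Or.inl ⟨h'.1, h'.2, rfl⟩, ?_⟩
        have e1 : idx1 n a = a+6 := by omega
        have e2 : idx1 n ((a+1) % n) = a+7 := by
          rw [Nat.mod_eq_of_lt (by omega)]
          have := idx1_cases n hn (a+1) (by omega); omega
        rw [e1, e2, vc (show a+7 = (a+6)+1 by omega)]
        exact hunit (a+6)
      · have e1 : idx1 n a = n+2 := by omega
        have e2 : idx1 n ((a+1) % n) = 3 := by
          rw [Nat.mod_eq_of_lt (by omega)]
          have := idx1_cases n hn (a+1) (by omega); omega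
        rw [e1, e2, hsymm]
        have h := hch1 3
        rw [vc (show 3 + (n-1) = n+2 by omega)] at h
        rcases h with h | h
        · exact ⟨3, by omega, by unfold S1; exact Or.inr (Or.inl ⟨h', Or.inl rfl⟩), h⟩
        · exact ⟨4, by omega, by unfold S1; exact Or.inr (Or.inl ⟨h', Or.inr rfl⟩), by rw [h]⟩
      · have e1 : idx1 n a = 3 := by omega
        have e2 : idx1 n ((a+1) % n) = 2 := by
          rw [Nat.mod_eq_of_lt (by omega)]
          have := idx1_cases n hn (a+1) (by omega); omega
        refine ⟨2, by omega, by unfold S1; exact Or.inr (Or.inr (Or.inl ⟨h', rfl⟩)), ?_⟩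
        rw [e1, e2, vc (show (3:ℕ) = 2+1 by omega)]
        exact hbunit 2
      · have e1 : idx1 n a = 2 := by omega
        have e2 : idx1 n ((a+1) % n) = 1 := by
          rw [Nat.mod_eq_of_lt (by omega)]
          have := idx1_cases n hn (a+1) (by omega); omega
        refine ⟨1, by omega, by unfold S1; exact Or.inr (Or.inr (Or.inr (Or.inl ⟨h', rfl⟩))), ?_⟩
        rw [e1, e2, vc (show (2:ℕ) = 1+1 by omega)]
        exact hbunit 1
      · have e1 : idx1 n a = 1 := by omega
        have e2 : idx1 n ((a+1) % n) = 0 := by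
          rw [show a+1 = n by omega, Nat.mod_self]
          have := idx1_cases n hn 0 (by omega); omega
        refine ⟨0, by omega, by unfold S1; exact Or.inr (Or.inr (Or.inr (Or.inr (⟨h', rfl⟩)))), ?_⟩
        rw [e1, e2, vc (show (1:ℕ) = 0+1 by omega)]
        exact hbunit 0)
  -- ### Design 2
  have key2 := key γ n hn hno v hvinj c hcinj i (idx2 n) (S2 n)
    (by intro a ha; have := idx2_cases n hn a ha; omega)
    (by intro a b ha hb h
        have := idx2_cases n hn a ha; have := idx2_cases n hn b hb; omega)
    (by have := idx2_cases n hn 0 (by omega); omega)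
    (by have := idx2_cases n hn 1 (by omega); omega)
    (by intro a b s ha hb hsa hsb; unfold S2 at hsa hsb; omega)
    (by
      intro a ha1 ha2
      have hca := idx2_cases n hn a ha2
      rcases (by omega : a = 1 ∨ a = 2 ∨ a = 3 ∨ a = 4 ∨ a = 5 ∨ (6 ≤ a ∧ a ≤ n-4) ∨
        a = n-3 ∨ a = n-2 ∨ a = n-1) with h'|h'|h'|h'|h'|h'|h'|h'|h'
      · have e1 : idx2 n a = 7 := by omega
        have e2 : idx2 n ((a+1) % n) = n+2 := by
          rw [Nat.mod_eq_of_lt (by omega)]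
          have := idx2_cases n hn (a+1) (by omega); omega
        rw [e1, e2]
        have h := hch5 7
        rw [vc (show 7 + (n-5) = n+2 by omega), vc (show 7 + (n-4) = n+3 by omega)] at h
        rcases h with h | h
        · exact ⟨n+2, by omega, by unfold S2; exact Or.inl ⟨h', Or.inl rfl⟩, h⟩
        · exact ⟨n+3, by omega, by unfold S2; exact Or.inl ⟨h', Or.inr rfl⟩, h⟩
      · have e1 : idx2 n a = n+2 := by omega
        have e2 : idx2 n ((a+1) % n) = 2*n-3 := by
          rw [Nat.mod_eq_of_lt (by omega)]
          have := idx2_cases n hn (a+1) (by omega); omega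
        rw [e1, e2]
        have h := hch5 (n+2)
        rw [vc (show (n+2) + (n-5) = 2*n-3 by omega),
          vc (show (n+2) + (n-4) = 2*n-2 by omega)] at h
        rcases h with h | h
        · exact ⟨2*n-3, by omega, by unfold S2; exact Or.inr (Or.inl ⟨h', Or.inl rfl⟩), h⟩
        · exact ⟨2*n-2, by omega, by unfold S2; exact Or.inr (Or.inl ⟨h', Or.inr rfl⟩), h⟩
      · have e1 : idx2 n a = 2*n-3 := by omega
        have e2 : idx2 n ((a+1) % n) = 2*n-4 := by
          rw [Nat.mod_eq_of_lt (by omega)]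
          have := idx2_cases n hn (a+1) (by omega); omega
        refine ⟨2*n-4, by omega, by unfold S2; exact Or.inr (Or.inr (Or.inl ⟨h', rfl⟩)), ?_⟩
        rw [e1, e2, vc (show 2*n-3 = (2*n-4)+1 by omega)]
        exact hbunit (2*n-4)
      · have e1 : idx2 n a = 2*n-4 := by omega
        have e2 : idx2 n ((a+1) % n) = 2*n-5 := by
          rw [Nat.mod_eq_of_lt (by omega)]
          have := idx2_cases n hn (a+1) (by omega); omega
        refine ⟨2*n-5, by omega, by unfold S2; exact Or.inr (Or.inr (Or.inr (Or.inl ⟨h', rfl⟩))), ?_⟩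
        rw [e1, e2, vc (show 2*n-4 = (2*n-5)+1 by omega)]
        exact hbunit (2*n-5)
      · have e1 : idx2 n a = 2*n-5 := by omega
        have e2 : idx2 n ((a+1) % n) = 3*n-10 := by
          rw [Nat.mod_eq_of_lt (by omega)]
          have := idx2_cases n hn (a+1) (by omega); omega
        rw [e1, e2]
        have h := hch5 (2*n-5)
        rw [vc (show (2*n-5) + (n-5) = 3*n-10 by omega),
          vc (show (2*n-5) + (n-4) = 3*n-9 by omega)] at h
        rcases h with h | h
        · exact ⟨3*n-10, by omega, by unfold S2; exact Or.inr (Or.inr (Or.inr (Or.inr (Or.inl ⟨h', Or.inl rfl⟩)))), h⟩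
        · exact ⟨3*n-9, by omega, by unfold S2; exact Or.inr (Or.inr (Or.inr (Or.inr (Or.inl ⟨h', Or.inr rfl⟩)))), h⟩
      · have e1 : idx2 n a = 3*n-4-a := by omega
        have e2 : idx2 n ((a+1) % n) = 3*n-5-a := by
          rw [Nat.mod_eq_of_lt (by omega)]
          have := idx2_cases n hn (a+1) (by omega); omega
        refine ⟨3*n-5-a, by omega, by unfold S2; exact Or.inr (Or.inr (Or.inr (Or.inr (Or.inr (Or.inl ⟨h'.1, h'.2, rfl⟩))))), ?_⟩
        rw [e1, e2, vc (show 3*n-4-a = (3*n-5-a)+1 by omega)]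
        exact hbunit (3*n-5-a)
      · have e1 : idx2 n a = 2*n-1 := by omega
        have e2 : idx2 n ((a+1) % n) = 2 := by
          rw [Nat.mod_eq_of_lt (by omega)]
          have := idx2_cases n hn (a+1) (by omega); omega
        rw [e1, e2]
        have h := hch5 (2*n-1)
        rw [vc (show (2*n-1) + (n-5) = (3*n-8)+2 by omega),
          vc (show (2*n-1) + (n-4) = (3*n-8)+3 by omega), hwrap 2, hwrap 3] at h
        rcases h with h | h
        · exact ⟨2, by omega, by unfold S2; exact Or.inr (Or.inr (Or.inr (Or.inr (Or.inr (Or.inr (Or.inl ⟨h', Or.inl rfl⟩)))))), h⟩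
        · exact ⟨3, by omega, by unfold S2; exact Or.inr (Or.inr (Or.inr (Or.inr (Or.inr (Or.inr (Or.inl ⟨h', Or.inr rfl⟩)))))), h⟩
      · have e1 : idx2 n a = 2 := by omega
        have e2 : idx2 n ((a+1) % n) = 1 := by
          rw [Nat.mod_eq_of_lt (by omega)]
          have := idx2_cases n hn (a+1) (by omega); omega
        refine ⟨1, by omega, by unfold S2; exact Or.inr (Or.inr (Or.inr (Or.inr (Or.inr (Or.inr (Or.inr (Or.inl ⟨h', rfl⟩))))))), ?_⟩
        rw [e1, e2, vc (show (2:ℕ) = 1+1 by omega)]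
        exact hbunit 1
      · have e1 : idx2 n a = 1 := by omega
        have e2 : idx2 n ((a+1) % n) = 0 := by
          rw [show a+1 = n by omega, Nat.mod_self]
          have := idx2_cases n hn 0 (by omega); omega
        refine ⟨0, by omega, by unfold S2; exact Or.inr (Or.inr (Or.inr (Or.inr (Or.inr (Or.inr (Or.inr (Or.inr (⟨h', rfl⟩)))))))), ?_⟩
        rw [e1, e2, vc (show (1:ℕ) = 0+1 by omega)]
        exact hbunit 0)
  -- ### Design 3
  have key3 := key γ n hn hno v hvinj c hcinj i (idx3 n) (S3 n)
    (by intro a ha; have := idx3_cases n hn a ha; omega)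
    (by intro a b ha hb h
        have := idx3_cases n hn a ha; have := idx3_cases n hn b hb; omega)
    (by have := idx3_cases n hn 0 (by omega); omega)
    (by have := idx3_cases n hn 1 (by omega); omega)
    (by intro a b s ha hb hsa hsb; unfold S3 at hsa hsb; omega)
    (by
      intro a ha1 ha2
      have hca := idx3_cases n hn a ha2
      rcases (by omega : a = 1 ∨ a = 2 ∨ (3 ≤ a ∧ a ≤ n-5) ∨ a = n-4 ∨
        a = n-3 ∨ a = n-2 ∨ a = n-1) with h'|h'|h'|h'|h'|h'|h'
      · have e1 : idx3 n a = 7 := by omega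
        have e2 : idx3 n ((a+1) % n) = n+6 := by
          rw [Nat.mod_eq_of_lt (by omega)]
          have := idx3_cases n hn (a+1) (by omega); omega
        rw [e1, e2]
        have h := hch1 7
        rw [vc (show 7 + (n-1) = n+6 by omega)] at h
        rcases h with h | h
        · exact ⟨7, by omega, by unfold S3; exact Or.inl ⟨h', Or.inl rfl⟩, h⟩
        · exact ⟨8, by omega, by unfold S3; exact Or.inl ⟨h', Or.inr rfl⟩, by rw [h, vc (show 7+1 = 8 by omega)]⟩
      · have e1 : idx3 n a = n+6 := by omega
        have e2 : idx3 n ((a+1) % n) = 11 := by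
          rw [Nat.mod_eq_of_lt (by omega)]
          have := idx3_cases n hn (a+1) (by omega); omega
        rw [e1, e2, hsymm]
        have h := hch5 11
        rw [vc (show 11 + (n-5) = n+6 by omega), vc (show 11 + (n-4) = n+7 by omega)] at h
        rcases h with h | h
        · exact ⟨n+6, by omega, by unfold S3; exact Or.inr (Or.inl ⟨h', Or.inl rfl⟩), h⟩
        · exact ⟨n+7, by omega, by unfold S3; exact Or.inr (Or.inl ⟨h', Or.inr rfl⟩), h⟩
      · refine ⟨a+8, by omega, by unfold S3; exact Or.inr (Or.inr (Or.inl ⟨h'.1, h'.2, rfl⟩)), ?_⟩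
        have e1 : idx3 n a = a+8 := by omega
        have e2 : idx3 n ((a+1) % n) = a+9 := by
          rw [Nat.mod_eq_of_lt (by omega)]
          have := idx3_cases n hn (a+1) (by omega); omega
        rw [e1, e2, vc (show a+9 = (a+8)+1 by omega)]
        exact hunit (a+8)
      · have e1 : idx3 n a = n+4 := by omega
        have e2 : idx3 n ((a+1) % n) = 2*n-1 := by
          rw [Nat.mod_eq_of_lt (by omega)]
          have := idx3_cases n hn (a+1) (by omega); omega
        rw [e1, e2]
        have h := hch5 (n+4)
        rw [vc (show (n+4) + (n-5) = 2*n-1 by omega),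
          vc (show (n+4) + (n-4) = 2*n by omega)] at h
        rcases h with h | h
        · exact ⟨2*n-1, by omega, by unfold S3; exact Or.inr (Or.inr (Or.inr (Or.inl ⟨h', Or.inl rfl⟩))), h⟩
        · exact ⟨2*n, by omega, by unfold S3; exact Or.inr (Or.inr (Or.inr (Or.inl ⟨h', Or.inr rfl⟩))), h⟩
      · have e1 : idx3 n a = 2*n-1 := by omega
        have e2 : idx3 n ((a+1) % n) = 2*n-2 := by
          rw [Nat.mod_eq_of_lt (by omega)]
          have := idx3_cases n hn (a+1) (by omega); omega
        refine ⟨2*n-2, by omega, by unfold S3; exact Or.inr (Or.inr (Or.inr (Or.inr (Or.inl ⟨h', rfl⟩)))), ?_⟩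
        rw [e1, e2, vc (show 2*n-1 = (2*n-2)+1 by omega)]
        exact hbunit (2*n-2)
      · have e1 : idx3 n a = 2*n-2 := by omega
        have e2 : idx3 n ((a+1) % n) = 2*n-3 := by
          rw [Nat.mod_eq_of_lt (by omega)]
          have := idx3_cases n hn (a+1) (by omega); omega
        refine ⟨2*n-3, by omega, by unfold S3; exact Or.inr (Or.inr (Or.inr (Or.inr (Or.inr (Or.inl ⟨h', rfl⟩))))), ?_⟩
        rw [e1, e2, vc (show 2*n-2 = (2*n-3)+1 by omega)]
        exact hbunit (2*n-3)
      · have e1 : idx3 n a = 2*n-3 := by omega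
        have e2 : idx3 n ((a+1) % n) = 0 := by
          rw [show a+1 = n by omega, Nat.mod_self]
          have := idx3_cases n hn 0 (by omega); omega
        rw [e1, e2]
        have h := hch5 (2*n-3)
        rw [vc (show (2*n-3) + (n-5) = (3*n-8)+0 by omega),
          vc (show (2*n-3) + (n-4) = (3*n-8)+1 by omega), hwrap 0, hwrap 1] at h
        rcases h with h | h
        · exact ⟨0, by omega, by unfold S3; exact Or.inr (Or.inr (Or.inr (Or.inr (Or.inr (Or.inr (⟨h', Or.inl rfl⟩)))))), h⟩
        · exact ⟨1, by omega, by unfold S3; exact Or.inr (Or.inr (Or.inr (Or.inr (Or.inr (Or.inr (⟨h', Or.inr rfl⟩)))))), h⟩)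
  -- ### Combine the three designs
  obtain ⟨s1, hs1lt, ⟨a1, ha11, ha12, hS1⟩, ht1⟩ := key1
  obtain ⟨s2, hs2lt, ⟨a2, ha21, ha22, hS2⟩, ht2⟩ := key2
  obtain ⟨s3, hs3lt, ⟨a3, ha31, ha32, hS3⟩, ht3⟩ := key3
  have e12 : s1 = s2 :=
    zmodcast_inj hs1lt hs2lt (add_left_cancel (hcinj (ht1.symm.trans ht2)))
  have e13 : s1 = s3 :=
    zmodcast_inj hs1lt hs3lt (add_left_cancel (hcinj (ht1.symm.trans ht3)))
  unfold S1 at hS1; unfold S2 at hS2; unfold S3 at hS3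
  have hfin : s1 = 0 ∨ s1 = 1 := by omega
  rcases hfin with h | h
  · subst h
    rw [Nat.cast_zero, add_zero] at ht1
    rw [ht1]
    exact Set.mem_insert _ _
  · subst h
    rw [Nat.cast_one] at ht1
    rw [ht1]
    exact Set.mem_insert_of_mem _ rfl
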